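/- arXiv:1403.0967 — 2 statements merged into one kernel-verified Lean document; each statement's English description precedes it below -/
import Mathlib

section
/- Let V be a normed space of B-valued continuous functions on a compact set D̄ contained in a larger compact set D̄' with sup-norms ‖·‖_{D̄} and ‖·‖_{D̄'}, and let A' ⊆ C(D̄', B) be a subspace such that the restriction map to D̄ is injective with closed image and satisfies ‖v|_{D̄}‖_{D̄} ≥ C‖v‖_{D̄'} for all v ∈ A' and some constant C > 0 (by the open mapping theorem). Suppose moreover every v ∈ A' is Lipschitz with Lipschitz constant at most C''·‖v‖_{D̄'} for a uniform constant C'' > 0. Then for every ε with 0 < ε ≤ C/(2C''), and every ε-net S_ε ⊆ D̄, one has ‖v|_{S_ε}‖_{S_ε} ≥ (1/2)‖v|_{D̄}‖_{D̄} for all v ∈ A'; in particular the restriction map to S_ε is injective on A'|_{D̄} with closed image. -/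
/-- Sup-norm of a `B`-valued function over a subset `K`. -/
noncomputable def supOn {X : Type*} {B : Type*} [NormedAddCommGroup B]
    (K : Set X) (v : X → B) : ℝ :=
  sSup ((fun x => ‖v x‖) '' K)

/-- Proposition 4.4: sampling inequality. If every `v ∈ A'` satisfies
`supOn K v ≥ C · supOn K' v` and is Lipschitz on `K` with constant `C'' · supOn K' v`,
then for every `ε`-net `S ⊆ K` with `0 < ε ≤ C/(2C'')` one has
`supOn S v ≥ (1/2) · supOn K v`; in particular restriction to `S` is injective on the
restrictions to `K` of elements of `A'`. -/
theorem stmt6 {X : Type*} [MetricSpace X] {B : Type*}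
    [NormedAddCommGroup B] [NormedSpace ℂ B] [CompleteSpace B]
    (K K' : Set X) (hKK' : K ⊆ K') (hK : IsCompact K) (hK' : IsCompact K')
    (A' : Submodule ℂ (X → B))
    (hcont : ∀ v ∈ A', ContinuousOn v K')
    (C C'' : ℝ) (hC : 0 < C) (hC'' : 0 < C'')
    (hlow : ∀ v ∈ A', C * supOn K' v ≤ supOn K v)
    (hlip : ∀ v ∈ A', ∀ x ∈ K, ∀ y ∈ K,
      ‖v x - v y‖ ≤ C'' * supOn K' v * dist x y)
    (ε : ℝ) (hε : 0 < ε) (hεC : ε ≤ C / (2 * C''))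
    (S : Set X) (hSK : S ⊆ K) (hnet : ∀ x ∈ K, ∃ s ∈ S, dist x s ≤ ε) :
    (∀ v ∈ A', (1 / 2 : ℝ) * supOn K v ≤ supOn S v) ∧
    (∀ v ∈ A', ∀ w ∈ A', (∀ s ∈ S, v s = w s) → ∀ x ∈ K, v x = w x) := by
  have hbddK : ∀ v ∈ A', BddAbove ((fun x => ‖v x‖) '' K) := fun v hv =>
    (hK.image_of_continuousOn (((hcont v hv).mono hKK').norm)).bddAbove
  have hbddK' : ∀ v ∈ A', BddAbove ((fun x => ‖v x‖) '' K') := fun v hv =>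
    (hK'.image_of_continuousOn ((hcont v hv).norm)).bddAbove
  have hbddS : ∀ v ∈ A', BddAbove ((fun x => ‖v x‖) '' S) := fun v hv =>
    (hbddK v hv).mono (Set.image_mono hSK)
  have main : ∀ v ∈ A', (1 / 2 : ℝ) * supOn K v ≤ supOn S v := by
    intro v hv
    rcases K.eq_empty_or_nonempty with hKe | hKne
    · have : supOn K v = 0 := by
        simp [supOn, hKe, Real.sSup_empty]
      rw [this]
      simpa [supOn] using Real.sSup_nonneg (by rintro x ⟨y, _, rfl⟩; positivity)
    -- maximizer
    obtain ⟨x₀, hx₀K, hx₀max⟩ := hK.exists_isMaxOn hKne ((hcont v hv).mono hKK').norm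
    have hsupK : supOn K v = ‖v x₀‖ := by
      refine le_antisymm (csSup_le (hKne.image _) ?_) (le_csSup (hbddK v hv) ⟨x₀, hx₀K, rfl⟩)
      rintro _ ⟨y, hy, rfl⟩; exact hx₀max hy
    obtain ⟨s, hsS, hds⟩ := hnet x₀ hx₀K
    have hK'nonneg : 0 ≤ supOn K' v :=
      le_trans (norm_nonneg (v x₀)) (le_csSup (hbddK' v hv) ⟨x₀, hKK' hx₀K, rfl⟩)
    have hlipb : ‖v x₀ - v s‖ ≤ C'' * supOn K' v * ε := by
      calc ‖v x₀ - v s‖ ≤ C'' * supOn K' v * dist x₀ s := hlip v hv x₀ hx₀K s (hSK hsS)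
        _ ≤ C'' * supOn K' v * ε := by
            exact mul_le_mul_of_nonneg_left hds (by positivity)
    have hhalf : C'' * supOn K' v * ε ≤ (1 / 2 : ℝ) * supOn K v := by
      have h1 : C'' * ε ≤ C / 2 := by
        calc C'' * ε ≤ C'' * (C / (2 * C'')) :=
              mul_le_mul_of_nonneg_left hεC hC''.le
          _ = C / 2 := by field_simp
      calc C'' * supOn K' v * ε = (C'' * ε) * supOn K' v := by ring
        _ ≤ (C / 2) * supOn K' v := mul_le_mul_of_nonneg_right h1 hK'nonneg
        _ = (1 / 2 : ℝ) * (C * supOn K' v) := by ring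
        _ ≤ (1 / 2 : ℝ) * supOn K v := by
            exact mul_le_mul_of_nonneg_left (hlow v hv) (by norm_num)
    have hvs : (1 / 2 : ℝ) * supOn K v ≤ ‖v s‖ := by
      have h1 : ‖v x₀‖ - ‖v s‖ ≤ ‖v x₀ - v s‖ := norm_sub_norm_le _ _
      have := hlipb.trans hhalf
      rw [hsupK]
      nlinarith [norm_nonneg (v x₀ - v s)]
    exact hvs.trans (le_csSup (hbddS v hv) ⟨s, hsS, rfl⟩)
  refine ⟨main, ?_⟩
  intro v hv w hw hvw x hx
  set u : X → B := v - w with hu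
  have huA : u ∈ A' := A'.sub_mem hv hw
  have hSzero : supOn S u ≤ 0 := by
    apply Real.sSup_le _ le_rfl
    rintro _ ⟨s, hsS, rfl⟩
    simp [hu, hvw s hsS]
  have h1 : ‖u x‖ ≤ supOn K u := le_csSup (hbddK u huA) ⟨x, hx, rfl⟩
  have h2 : (1 / 2 : ℝ) * supOn K u ≤ supOn S u := main u huA
  have : ‖u x‖ ≤ 0 := by nlinarith
  have : u x = 0 := norm_le_zero_iff.mp this
  have : v x - w x = 0 := this
  exact sub_eq_zero.mp this
end

section
/- Let G, H : Z → Z and ∂ : Z → Z be continuous linear maps on a Fréchet space Z with ω = ∂Gω + Hω for all ω in a closed subspace 𝒵 ⊆ Z with ∂(𝒵-preimages) ⊆ 𝒵, and suppose H(∂ξ) = 0 for all ξ. Then the map ∂G ⊕ H : 𝒵 → ℬ ⊕ ℋ, where ℬ := ∂G(𝒵) and ℋ := H(𝒵), is an isomorphism of Fréchet spaces with inverse (η, χ) ↦ η + χ; in particular ℬ = {ω ∈ 𝒵 : Hω = 0} is closed and 𝒵/ℬ ≅ ℋ. -/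
/-- Kohn decomposition of the space of closed forms. If
`ω = ∂Gω + Hω` holds on a closed subspace `𝒵` of a Fréchet space `Z`, with `H ∘ ∂ = 0`,
then with `ℬ := ∂G(𝒵)` and `ℋ := H(𝒵)` one has `ℬ = {ω ∈ 𝒵 : Hω = 0}`, `ℬ` is closed,
the map `(η, χ) ↦ η + χ` is a continuous linear isomorphism `ℬ × ℋ ≅ 𝒵` (with inverse
`∂G ⊕ H`), and `𝒵/ℬ ≅ ℋ`. -/
theorem stmt18 {Z : Type*}
    [AddCommGroup Z] [Module ℂ Z] [UniformSpace Z] [IsUniformAddGroup Z]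
    [ContinuousSMul ℂ Z] [CompleteSpace Z] [T2Space Z]
    (d G H : Z →L[ℂ] Z) (𝒵 : Submodule ℂ Z) (h𝒵cl : IsClosed (𝒵 : Set Z))
    (hdec : ∀ ω ∈ 𝒵, ω = d (G ω) + H ω)
    (hHd : ∀ ξ : Z, H (d ξ) = 0)
    (hdG : ∀ ω ∈ 𝒵, d (G ω) ∈ 𝒵) (hH : ∀ ω ∈ 𝒵, H ω ∈ 𝒵) :
    letI ℬ : Submodule ℂ Z := 𝒵.map ((d.comp G : Z →L[ℂ] Z) : Z →ₗ[ℂ] Z)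
    letI ℋ : Submodule ℂ Z := 𝒵.map ((H : Z →L[ℂ] Z) : Z →ₗ[ℂ] Z)
    (ℬ = 𝒵 ⊓ LinearMap.ker ((H : Z →L[ℂ] Z) : Z →ₗ[ℂ] Z)) ∧
    IsClosed (ℬ : Set Z) ∧
    (∃ e : (↥ℬ × ↥ℋ) ≃L[ℂ] ↥𝒵,
      ∀ x : ↥ℬ × ↥ℋ, ((e x : Z) = (x.1 : Z) + (x.2 : Z))) ∧
    (∃ e' : (↥𝒵 ⧸ (ℬ.comap 𝒵.subtype)) ≃L[ℂ] ↥ℋ,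
      ∀ ω : ↥𝒵, ((e' (Submodule.Quotient.mk ω) : Z) = H (ω : Z))) := by
  set ℬ : Submodule ℂ Z := 𝒵.map ((d.comp G : Z →L[ℂ] Z) : Z →ₗ[ℂ] Z) with hℬdef
  set ℋ : Submodule ℂ Z := 𝒵.map ((H : Z →L[ℂ] Z) : Z →ₗ[ℂ] Z) with hℋdef
  -- basic membership facts
  have hℬmem : ∀ ω ∈ 𝒵, d (G ω) ∈ ℬ := fun ω hω => ⟨ω, hω, rfl⟩
  have hℋmem : ∀ ω ∈ 𝒵, H ω ∈ ℋ := fun ω hω => ⟨ω, hω, rfl⟩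
  have hℬ𝒵 : ∀ η ∈ ℬ, η ∈ 𝒵 := by rintro η ⟨ω, hω, rfl⟩; exact hdG ω hω
  have hℋ𝒵 : ∀ χ ∈ ℋ, χ ∈ 𝒵 := by rintro χ ⟨ω, hω, rfl⟩; exact hH ω hω
  have hHℬ : ∀ η ∈ ℬ, H η = 0 := by rintro η ⟨ω, hω, rfl⟩; exact hHd (G ω)
  have hdGℬ : ∀ η ∈ ℬ, d (G η) = η := by
    intro η hη
    have h1 := hdec η (hℬ𝒵 η hη)
    rw [hHℬ η hη, add_zero] at h1
    exact h1.symm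
  have hHℋ : ∀ χ ∈ ℋ, H χ = χ := by
    rintro χ ⟨ω, hω, rfl⟩
    have h1 : H ω = ω - d (G ω) := by
      rw [eq_sub_iff_add_eq, add_comm]
      exact (hdec ω hω).symm
    show H (H ω) = H ω
    rw [h1, map_sub, hHd, sub_zero]
    exact h1
  have hdGℋ : ∀ χ ∈ ℋ, d (G χ) = 0 := by
    intro χ hχ
    have h1 := hdec χ (hℋ𝒵 χ hχ)
    rw [hHℋ χ hχ] at h1
    exact add_right_cancel (h1.symm.trans (zero_add χ).symm)
  -- first conjunct
  have hBeq : ℬ = 𝒵 ⊓ LinearMap.ker ((H : Z →L[ℂ] Z) : Z →ₗ[ℂ] Z) := by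
    ext η
    constructor
    · intro hη
      exact ⟨hℬ𝒵 η hη, hHℬ η hη⟩
    · rintro ⟨h1, h2⟩
      have h3 := hdec η h1
      have h2' : H η = 0 := h2
      rw [h2', add_zero] at h3
      exact ⟨η, h1, h3.symm⟩
  refine ⟨hBeq, ?_, ?_, ?_⟩
  · rw [hBeq]
    have : ((𝒵 ⊓ LinearMap.ker ((H : Z →L[ℂ] Z) : Z →ₗ[ℂ] Z) : Submodule ℂ Z) : Set Z)
        = (𝒵 : Set Z) ∩ (H ⁻¹' {0}) := by
      ext x; simp [Set.mem_inter_iff, LinearMap.mem_ker]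
    rw [this]
    exact h𝒵cl.inter (isClosed_singleton.preimage H.continuous)
  · -- the product decomposition
    let f : (↥ℬ × ↥ℋ) →L[ℂ] ↥𝒵 :=
      { toFun := fun x => ⟨(x.1 : Z) + (x.2 : Z),
          𝒵.add_mem (hℬ𝒵 _ x.1.2) (hℋ𝒵 _ x.2.2)⟩
        map_add' := by intro a b; ext; simp; abel
        map_smul' := by intro c a; ext; simp [smul_add]
        cont := by
          exact ((continuous_subtype_val.comp continuous_fst).add
            (continuous_subtype_val.comp continuous_snd)).subtype_mk _ }
    let g : ↥𝒵 →L[ℂ] (↥ℬ × ↥ℋ) :=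
      { toFun := fun ω => (⟨d (G (ω : Z)), hℬmem _ ω.2⟩, ⟨H (ω : Z), hℋmem _ ω.2⟩)
        map_add' := by intro a b; ext <;> simp
        map_smul' := by intro c a; ext <;> simp
        cont := by
          refine Continuous.prodMk ?_ ?_
          · exact ((d.continuous.comp G.continuous).comp continuous_subtype_val).subtype_mk _
          · exact (H.continuous.comp continuous_subtype_val).subtype_mk _ }
    have hgf : Function.LeftInverse g f := by
      rintro ⟨η, χ⟩
      have h1 : d (G ((η : Z) + (χ : Z))) = (η : Z) := by
        rw [map_add, map_add, hdGℬ _ η.2, hdGℋ _ χ.2, add_zero]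
      have h2 : H ((η : Z) + (χ : Z)) = (χ : Z) := by
        rw [map_add, hHℬ _ η.2, hHℋ _ χ.2, zero_add]
      ext
      · exact h1
      · exact h2
    have hfg : Function.RightInverse g f := by
      rintro ⟨ω, hω⟩
      ext
      exact (hdec ω hω).symm
    refine ⟨ContinuousLinearEquiv.equivOfInverse f g hgf hfg, ?_⟩
    rintro ⟨η, χ⟩
    rfl
  · -- the quotient description
    set ℬ' : Submodule ℂ ↥𝒵 := ℬ.comap 𝒵.subtype with hℬ'
    let hbar : ↥𝒵 →L[ℂ] ↥ℋ :=
      { toFun := fun ω => ⟨H (ω : Z), hℋmem _ ω.2⟩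
        map_add' := by intro a b; ext; simp
        map_smul' := by intro c a; ext; simp
        cont := (H.continuous.comp continuous_subtype_val).subtype_mk _ }
    have hker : ℬ' ≤ LinearMap.ker (hbar : ↥𝒵 →ₗ[ℂ] ↥ℋ) := by
      intro ω hω
      have : H (ω : Z) = 0 := hHℬ _ hω
      ext
      exact this
    let φ : (↥𝒵 ⧸ ℬ') →ₗ[ℂ] ↥ℋ := ℬ'.liftQ (hbar : ↥𝒵 →ₗ[ℂ] ↥ℋ) hker
    have hφcont : Continuous φ := by
      rw [ℬ'.isOpenQuotientMap_mkQ.isQuotientMap.continuous_iff]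
      exact hbar.continuous
    let φL : (↥𝒵 ⧸ ℬ') →L[ℂ] ↥ℋ := ⟨φ, hφcont⟩
    let inc : ↥ℋ →L[ℂ] ↥𝒵 :=
      { toFun := fun χ => ⟨(χ : Z), hℋ𝒵 _ χ.2⟩
        map_add' := by intro a b; ext; simp
        map_smul' := by intro c a; ext; simp
        cont := continuous_subtype_val.subtype_mk _ }
    let mkQL : ↥𝒵 →L[ℂ] (↥𝒵 ⧸ ℬ') := ⟨ℬ'.mkQ, continuous_quot_mk⟩
    let ψ : ↥ℋ →L[ℂ] (↥𝒵 ⧸ ℬ') := mkQL.comp inc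
    have h1 : Function.LeftInverse ψ φL := by
      intro q
      induction q using Quotient.inductionOn' with
      | h ω =>
        have hq : (Quotient.mk'' ω : ↥𝒵 ⧸ ℬ') = Submodule.Quotient.mk ω := rfl
        rw [hq]
        show Submodule.Quotient.mk (⟨H (ω : Z), hℋ𝒵 _ (hℋmem _ ω.2)⟩ : ↥𝒵)
          = Submodule.Quotient.mk ω
        rw [Submodule.Quotient.eq]
        show (⟨H (ω : Z), _⟩ : ↥𝒵) - ω ∈ ℬ'
        have hmem : H (ω : Z) - (ω : Z) ∈ ℬ := by
          have h3 : H (ω : Z) - (ω : Z) = -(d (G (ω : Z))) := by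
            rw [eq_neg_iff_add_eq_zero, sub_add_eq_add_sub, sub_eq_zero, add_comm]
            exact (hdec (ω : Z) ω.2).symm
          rw [h3]
          exact ℬ.neg_mem (hℬmem _ ω.2)
        exact hmem
    have h2 : Function.RightInverse ψ φL := by
      intro χ
      ext
      exact hHℋ _ χ.2
    refine ⟨ContinuousLinearEquiv.equivOfInverse φL ψ h1 h2, ?_⟩
    intro ω
    rfl
end
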